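/- For every a > 0 and every l > 0, the unique positive solutions ν(l,a) of l = κ·tanh(κa/2) and η(l,a) of l = κ/tanh(κa/2) − 2/a satisfy ν(l,a) < η(l,a). -/

import Mathlib

theorem stmt10 (a l ν η : ℝ) (ha : 0 < a) (hl : 0 < l)
    (hν : 0 < ν) (hνsol : ν * Real.tanh (ν * a / 2) = l)
    (hη : 0 < η) (hηsol : η / Real.tanh (η * a / 2) - 2 / a = l) :
    ν < η := by
  by_contra h
  push_neg at h  -- η ≤ ν
  set t := η * a / 2 with ht
  set u := ν * a / 2 with hu
  have htpos : 0 < t := by positivity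
  have hs : 0 < Real.sinh t := Real.sinh_pos_iff.2 htpos
  have hc : 0 < Real.cosh t := Real.cosh_pos t
  have hsu : 0 < Real.sinh u := Real.sinh_pos_iff.2 (by positivity)
  have hcu : 0 < Real.cosh u := Real.cosh_pos u
  have hst : t < Real.sinh t := Real.self_lt_sinh_iff.2 htpos
  have hid : Real.cosh t ^ 2 - Real.sinh t ^ 2 = 1 := Real.cosh_sq_sub_sinh_sq t
  have hηa : η = 2 * t / a := by rw [ht]; field_simp
  -- key: l < η * tanh t
  have key : l < η * Real.tanh t := by
    rw [← hηsol, Real.tanh_eq_sinh_div_cosh, hηa]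
    have hc1 : 1 ≤ Real.cosh t := Real.one_le_cosh t
    have core : t < Real.sinh t * Real.cosh t := by nlinarith
    rw [div_div_eq_mul_div, sub_lt_iff_lt_add, div_lt_iff₀ hs]
    field_simp
    nlinarith [mul_lt_mul_of_pos_left core (mul_pos ha ha), mul_pos htpos (mul_pos ha ha), congrArg (t * ·) hid]
  -- monotonicity of tanh
  have htanh_le : Real.tanh t ≤ Real.tanh u := by
    have hut : 0 ≤ u - t := by
      have : t ≤ u := by
        rw [ht, hu]
        have := h
        nlinarith
      linarith
    have hsub : Real.sinh (u - t) = Real.sinh u * Real.cosh t - Real.cosh u * Real.sinh t :=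
      Real.sinh_sub u t
    have hnn : 0 ≤ Real.sinh (u - t) := by
      rcases eq_or_lt_of_le hut with h0 | h0
      · simp [← h0]
      · exact (Real.sinh_pos_iff.2 h0).le
    rw [Real.tanh_eq_sinh_div_cosh, Real.tanh_eq_sinh_div_cosh,
      div_le_div_iff₀ hc hcu]
    nlinarith
  have htanhpos : 0 < Real.tanh t := by
    rw [Real.tanh_eq_sinh_div_cosh]; positivity
  have : η * Real.tanh t ≤ ν * Real.tanh u :=
    mul_le_mul h htanh_le htanhpos.le hν.le
  linarith
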